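/- Let $R$ be a principal Artinian local ring of length $k$ and let $H$, $H'$ be finite $R$-modules such that $H \simeq R^{\epsilon}\oplus M\oplus M$ and $H' \simeq R^{\epsilon}\oplus M'\oplus M'$ for some $\epsilon\in\{0,1\}$ and cyclic quotient data as follows: suppose there is a module $H_0$ with injections $H_0\hookrightarrow H$ and $H_0\hookrightarrow H'$ whose cokernels are direct sums of two cyclic $R$-modules of lengths $(a,b)$ and $(k-a-\delta, k-b-\delta)$ respectively, for integers $a,b,\delta\ge 0$. Then $\mathrm{length}(M') = \mathrm{length}(M) + k - a - b - \delta$. -/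

import Mathlib

/-- `moduleLengthIs R M n` says that `M` has a composition series of length `n` as an
`R`-module, i.e. `M` has length `n`. -/
def moduleLengthIs (R M : Type*) [Ring R] [AddCommGroup M] [Module R M] (n : ℕ) : Prop :=
  ∃ s : CompositionSeries (Submodule R M), s.head = ⊥ ∧ s.last = ⊤ ∧ s.length = n

section Aux

open IsLocalRing

variable {R : Type*} [CommRing R]

lemma moduleLengthIs_unique {M : Type*} [AddCommGroup M] [Module R M] {n m : ℕ}
    (h1 : moduleLengthIs R M n) (h2 : moduleLengthIs R M m) : n = m := by
  obtain ⟨s, hs1, hs2, rfl⟩ := h1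
  obtain ⟨t, ht1, ht2, rfl⟩ := h2
  exact (CompositionSeries.jordan_holder s t (hs1.trans ht1.symm)
    (hs2.trans ht2.symm)).length_eq

lemma moduleLengthIs_congr {M N : Type*} [AddCommGroup M] [Module R M]
    [AddCommGroup N] [Module R N] (e : M ≃ₗ[R] N) {n : ℕ}
    (h : moduleLengthIs R M n) : moduleLengthIs R N n := by
  obtain ⟨s, hs1, hs2, rfl⟩ := h
  let e' : Submodule R M ≃o Submodule R N := Submodule.orderIsoMapComap e
  refine ⟨s.map ⟨e', fun hab => (apply_covBy_apply_iff e').mpr hab⟩, ?_, ?_, rfl⟩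
  · show e' s.head = ⊥
    rw [hs1]; exact e'.map_bot
  · show e' s.last = ⊤
    rw [hs2]; exact e'.map_top

lemma moduleLengthIs_subquot {B : Type*} [AddCommGroup B] [Module R B]
    (N : Submodule R B) {n m : ℕ}
    (h1 : moduleLengthIs R N n) (h2 : moduleLengthIs R (B ⧸ N) m) :
    moduleLengthIs R B (n + m) := by
  obtain ⟨s, hs1, hs2, rfl⟩ := h1
  obtain ⟨t, ht1, ht2, rfl⟩ := h2
  let f1 : Submodule R N ↪o Submodule R B := Submodule.MapSubtype.orderEmbedding N
  have hr1 : Set.range f1 = Set.Iic N := by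
    ext J
    constructor
    · rintro ⟨q, rfl⟩
      exact Submodule.map_subtype_le N q
    · intro hJ
      exact ⟨Submodule.comap N.subtype J, by
        simpa [f1, Submodule.map_comap_subtype] using inf_eq_right.mpr hJ⟩
  let f2 : Submodule R (B ⧸ N) ↪o Submodule R B := Submodule.comapMkQOrderEmbedding N
  have hr2 : Set.range f2 = Set.Ici N := by
    ext J
    constructor
    · rintro ⟨q, rfl⟩
      simpa [f2, Submodule.comapMkQOrderEmbedding_eq] using
        (le_trans (le_of_eq (Submodule.ker_mkQ N).symm) (Submodule.comap_mono bot_le))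
    · intro hJ
      exact ⟨Submodule.map N.mkQ J, by
        simp [f2, Submodule.comapMkQOrderEmbedding_eq, Submodule.comap_map_mkQ,
          sup_eq_right.mpr (Set.mem_Ici.mp hJ)]⟩
  have hc1 : (Set.range f1).OrdConnected := hr1 ▸ Set.ordConnected_Iic
  have hc2 : (Set.range f2).OrdConnected := hr2 ▸ Set.ordConnected_Ici
  let s' : CompositionSeries (Submodule R B) := s.map ⟨f1, fun hab => (hc1.apply_covBy_apply_iff f1).mpr hab⟩
  let t' : CompositionSeries (Submodule R B) := t.map ⟨f2, fun hab => (hc2.apply_covBy_apply_iff f2).mpr hab⟩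
  have hconnect : s'.last = t'.head := by
    show f1 s.last = f2 t.head
    rw [hs2, ht1]
    show Submodule.map N.subtype ⊤ = Submodule.comap N.mkQ ⊥
    simp [Submodule.map_top, Submodule.range_subtype, Submodule.comap_bot, Submodule.ker_mkQ]
  refine ⟨s'.smash t' hconnect, ?_, ?_, rfl⟩
  · rw [RelSeries.head_smash]
    show f1 s.head = ⊥
    rw [hs1]
    show Submodule.map N.subtype ⊥ = ⊥
    simp
  · rw [RelSeries.last_smash]
    show f2 t.last = ⊤
    rw [ht2]
    show Submodule.comap N.mkQ ⊤ = ⊤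
    simp

lemma moduleLengthIs_zero {M : Type*} [AddCommGroup M] [Module R M] [Subsingleton M] :
    moduleLengthIs R M 0 :=
  ⟨RelSeries.singleton _ ⊥, RelSeries.head_singleton _, by
    rw [RelSeries.last_singleton]; exact Subsingleton.elim _ _, rfl⟩

lemma moduleLengthIs_prod {A B : Type*} [AddCommGroup A] [Module R A]
    [AddCommGroup B] [Module R B] {n m : ℕ}
    (h1 : moduleLengthIs R A n) (h2 : moduleLengthIs R B m) :
    moduleLengthIs R (A × B) (n + m) := by
  have hsnd : Function.Surjective (LinearMap.snd R A B) := fun b => ⟨(0, b), rfl⟩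
  refine moduleLengthIs_subquot (LinearMap.ker (LinearMap.snd R A B)) ?_ ?_
  · exact moduleLengthIs_congr
      ((LinearEquiv.ofInjective _ (LinearMap.inl_injective (M := A) (M₂ := B))).trans
        (LinearEquiv.ofEq _ _ (LinearMap.range_inl R A B))) h1
  · exact moduleLengthIs_congr
      ((LinearMap.snd R A B).quotKerEquivOfSurjective hsnd).symm h2

variable [IsArtinianRing R] [IsLocalRing R] [IsPrincipalIdealRing R]

omit [IsPrincipalIdealRing R] in
lemma exists_pow_maximalIdeal_eq_bot : ∃ n, (maximalIdeal R) ^ n = ⊥ := by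
  obtain ⟨n, hn⟩ := IsArtinianRing.isNilpotent_jacobson_bot (R := R)
  exact ⟨n, by rwa [IsLocalRing.jacobson_eq_maximalIdeal ⊥ bot_ne_top] at hn⟩

lemma ideal_eq_pow_maximalIdeal (I : Ideal R) : ∃ j, I = maximalIdeal R ^ j := by
  classical
  obtain ⟨n, hn⟩ := exists_pow_maximalIdeal_eq_bot (R := R)
  by_cases hI : I = ⊥
  · exact ⟨n, by rw [hI, hn]⟩
  have hP : ∃ j, ¬ I ≤ maximalIdeal R ^ j :=
    ⟨n, by rw [hn]; simpa [le_bot_iff] using hI⟩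
  set j0 := Nat.find hP with hj0def
  have hj0 : ¬ I ≤ maximalIdeal R ^ j0 := Nat.find_spec hP
  have hj0pos : j0 ≠ 0 := by
    intro h
    exact hj0 (by rw [h, pow_zero, Ideal.one_eq_top]; exact le_top)
  have hle : I ≤ maximalIdeal R ^ (j0 - 1) :=
    not_not.mp (Nat.find_min hP (by omega))
  obtain ⟨π, hπ0⟩ := (IsPrincipalIdealRing.principal (maximalIdeal R)).principal
  have hπ : maximalIdeal R = Ideal.span {π} := hπ0
  obtain ⟨x, hxI, hx⟩ := SetLike.not_le_iff_exists.mp hj0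
  have hxmem : x ∈ Ideal.span {π ^ (j0 - 1)} := by
    rw [← Ideal.span_singleton_pow, ← hπ]
    exact hle hxI
  obtain ⟨c, hc⟩ := Ideal.mem_span_singleton'.mp hxmem
  have hπm : π ∈ maximalIdeal R := hπ ▸ Ideal.subset_span rfl
  have hcu : IsUnit c := by
    by_contra hcu
    apply hx
    have hcm : c ∈ maximalIdeal R := hcu
    have : c * π ^ (j0 - 1) ∈ maximalIdeal R * maximalIdeal R ^ (j0 - 1) :=
      Ideal.mul_mem_mul hcm (Ideal.pow_mem_pow hπm _)
    rw [← pow_succ'] at this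
    have he : j0 - 1 + 1 = j0 := by omega
    rwa [hc, he] at this
  refine ⟨j0 - 1, le_antisymm hle ?_⟩
  rw [show (maximalIdeal R : Ideal R) = Ideal.span {π} from hπ, Ideal.span_singleton_pow,
    Ideal.span_singleton_le_iff_mem]
  obtain ⟨u, rfl⟩ := hcu
  have : π ^ (j0 - 1) = (↑u⁻¹ : R) * x := by
    rw [← hc, ← mul_assoc]
    simp
  rw [this]
  exact Ideal.mul_mem_left _ _ hxI

lemma pow_maximalIdeal_covBy {i : ℕ} (hi : maximalIdeal R ^ i ≠ ⊥) :
    maximalIdeal R ^ (i + 1) ⋖ maximalIdeal R ^ i := by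
  obtain ⟨n, hn⟩ := exists_pow_maximalIdeal_eq_bot (R := R)
  have hstab : maximalIdeal R ^ (i + 1) ≠ maximalIdeal R ^ i := by
    intro h
    apply hi
    have key : ∀ j, maximalIdeal R ^ (i + j) = maximalIdeal R ^ i := by
      intro j
      induction j with
      | zero => rfl
      | succ j ih => rw [← Nat.add_assoc, pow_succ, ih, ← pow_succ, h]
    have := key n
    rw [eq_bot_iff, ← this]
    calc maximalIdeal R ^ (i + n) ≤ maximalIdeal R ^ n :=
          Ideal.pow_le_pow_right (by omega)
      _ = ⊥ := hn
  constructor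
  · exact lt_of_le_of_ne (Ideal.pow_le_pow_right (by omega)) hstab
  · intro J h1 h2
    obtain ⟨j, rfl⟩ := ideal_eq_pow_maximalIdeal J
    rcases le_or_gt j i with hj | hj
    · exact absurd (Ideal.pow_le_pow_right hj) (not_le_of_gt h2)
    · exact absurd (Ideal.pow_le_pow_right hj) (not_le_of_gt h1)

lemma maximalIdeal_pow_k {k : ℕ} (hk : moduleLengthIs R R k) :
    maximalIdeal R ^ k = ⊥ ∧ ∀ i < k, maximalIdeal R ^ i ≠ (⊥ : Ideal R) := by
  classical
  have hex : ∃ n, (maximalIdeal R) ^ n = ⊥ := exists_pow_maximalIdeal_eq_bot (R := R)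
  set n₀ := Nat.find hex with hn₀def
  have hn₀ : maximalIdeal R ^ n₀ = ⊥ := Nat.find_spec hex
  have hlt : ∀ i < n₀, maximalIdeal R ^ i ≠ (⊥ : Ideal R) := fun i hi => Nat.find_min hex hi
  have hRlen : moduleLengthIs R R n₀ := by
    refine ⟨⟨n₀, fun i => (maximalIdeal R ^ (n₀ - i.1) : Ideal R), fun i => ?_⟩, ?_, ?_, rfl⟩
    · show (maximalIdeal R ^ (n₀ - i.castSucc.1) : Ideal R) ⋖ maximalIdeal R ^ (n₀ - i.succ.1)
      have hi : i.1 < n₀ := i.2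
      have h1 : n₀ - i.castSucc.1 = (n₀ - i.1 - 1) + 1 := by
        simp only [Fin.coe_castSucc]; omega
      have h2 : n₀ - i.succ.1 = n₀ - i.1 - 1 := by
        simp only [Fin.val_succ]; omega
      rw [h1, h2]
      exact pow_maximalIdeal_covBy (hlt _ (by omega))
    · show (maximalIdeal R ^ (n₀ - (0 : Fin (n₀+1)).1) : Ideal R) = ⊥
      simpa using hn₀
    · show (maximalIdeal R ^ (n₀ - (Fin.last n₀).1) : Ideal R) = ⊤
      simp [Ideal.one_eq_top]
  have : k = n₀ := by
    obtain ⟨s, hs1, hs2, rfl⟩ := hk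
    obtain ⟨t, ht1, ht2, htl⟩ := hRlen
    rw [← htl]
    exact (CompositionSeries.jordan_holder s t (hs1.trans ht1.symm) (hs2.trans ht2.symm)).length_eq
  subst this
  exact ⟨hn₀, hlt⟩

lemma moduleLengthIs_quot_pow {k : ℕ} (hk : moduleLengthIs R R k) {a : ℕ} (ha : a ≤ k) :
    moduleLengthIs R (R ⧸ (maximalIdeal R ^ a : Ideal R)) a := by
  obtain ⟨-, hlt⟩ := maximalIdeal_pow_k hk
  set p : Ideal R := maximalIdeal R ^ a with hp
  let f2 : Submodule R (R ⧸ p) ↪o Submodule R R := Submodule.comapMkQOrderEmbedding p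
  have hr2 : Set.range f2 = Set.Ici p := by
    ext J
    constructor
    · rintro ⟨q, rfl⟩
      simpa [f2, Submodule.comapMkQOrderEmbedding_eq] using
        (le_trans (le_of_eq (Submodule.ker_mkQ p).symm) (Submodule.comap_mono bot_le))
    · intro hJ
      exact ⟨Submodule.map p.mkQ J, by
        simp [f2, Submodule.comapMkQOrderEmbedding_eq, Submodule.comap_map_mkQ,
          sup_eq_right.mpr (Set.mem_Ici.mp hJ)]⟩
  have hc2 : (Set.range f2).OrdConnected := hr2 ▸ Set.ordConnected_Ici
  have hple : ∀ i ≤ a, p ≤ maximalIdeal R ^ (a - i) :=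
    fun i hi => Ideal.pow_le_pow_right (by omega)
  have hcomap : ∀ i ≤ a, f2 (Submodule.map p.mkQ (maximalIdeal R ^ (a - i)))
      = maximalIdeal R ^ (a - i) := by
    intro i hi
    show Submodule.comap p.mkQ _ = _
    rw [Submodule.comap_map_mkQ, sup_eq_right.mpr (hple i hi)]
  refine ⟨⟨a, fun i => Submodule.map p.mkQ (maximalIdeal R ^ (a - i.1)), fun i => ?_⟩, ?_, ?_, rfl⟩
  · show Submodule.map p.mkQ (maximalIdeal R ^ (a - i.castSucc.1))
      ⋖ Submodule.map p.mkQ (maximalIdeal R ^ (a - i.succ.1))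
    refine (hc2.apply_covBy_apply_iff f2).mp ?_
    rw [hcomap _ (by omega), hcomap _ (by omega)]
    have hi : i.1 < a := i.2
    have h1 : a - i.castSucc.1 = (a - i.1 - 1) + 1 := by
      simp only [Fin.coe_castSucc]; omega
    have h2 : a - i.succ.1 = a - i.1 - 1 := by
      simp only [Fin.val_succ]; omega
    rw [h1, h2]
    exact pow_maximalIdeal_covBy (hlt _ (by omega))
  · show Submodule.map p.mkQ (maximalIdeal R ^ (a - (0 : Fin (a+1)).1)) = ⊥
    simp only [Fin.val_zero, Nat.sub_zero, ← hp]
    rw [eq_bot_iff, Submodule.map_le_iff_le_comap, Submodule.comap_bot, Submodule.ker_mkQ]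
  · show Submodule.map p.mkQ (maximalIdeal R ^ (a - (Fin.last a).1)) = ⊤
    simp only [Fin.val_last, Nat.sub_self, pow_zero, Ideal.one_eq_top]
    rw [Submodule.map_top, Submodule.range_mkQ]

end Aux

/-- Let `R` be a principal Artinian local ring of length `k`, and `H, H'` finite
`R`-modules with `H ≃ R^ε ⊕ M ⊕ M`, `H' ≃ R^ε ⊕ M' ⊕ M'` for some `ε ∈ {0,1}`. Suppose there
is a module `H₀` with injections into `H` and `H'` whose cokernels are direct sums of two
cyclic modules of lengths `(a, b)` and `(k-a-δ, k-b-δ)` respectively. Then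
`length M' = length M + k - a - b - δ`. -/
theorem stmt0 (R : Type*) [CommRing R] [IsArtinianRing R] [IsLocalRing R]
    [IsPrincipalIdealRing R] (k : ℕ) (hk : moduleLengthIs R R k)
    (M M' H H' H₀ : Type*)
    [AddCommGroup M] [Module R M] [Module.Finite R M]
    [AddCommGroup M'] [Module R M'] [Module.Finite R M']
    [AddCommGroup H] [Module R H] [Module.Finite R H]
    [AddCommGroup H'] [Module R H'] [Module.Finite R H']
    [AddCommGroup H₀] [Module R H₀] [Module.Finite R H₀]
    (ε : ℕ) (hε : ε ≤ 1)
    (eH : Nonempty (H ≃ₗ[R] (Fin ε → R) × M × M))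
    (eH' : Nonempty (H' ≃ₗ[R] (Fin ε → R) × M' × M'))
    (a b δ : ℕ) (haδ : a + δ ≤ k) (hbδ : b + δ ≤ k)
    (f : H₀ →ₗ[R] H) (hf : Function.Injective f)
    (g : H₀ →ₗ[R] H') (hg : Function.Injective g)
    (hcokf : Nonempty ((H ⧸ LinearMap.range f) ≃ₗ[R]
      ((R ⧸ (IsLocalRing.maximalIdeal R ^ a : Ideal R)) ×
        (R ⧸ (IsLocalRing.maximalIdeal R ^ b : Ideal R)))))
    (hcokg : Nonempty ((H' ⧸ LinearMap.range g) ≃ₗ[R]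
      ((R ⧸ (IsLocalRing.maximalIdeal R ^ (k - a - δ) : Ideal R)) ×
        (R ⧸ (IsLocalRing.maximalIdeal R ^ (k - b - δ) : Ideal R)))))
    (lM lM' : ℕ) (hlM : moduleLengthIs R M lM) (hlM' : moduleLengthIs R M' lM') :
    lM' + a + b + δ = lM + k := by
  have : IsNoetherianRing R := inferInstance
  obtain ⟨s₀, hh, hl⟩ := exists_compositionSeries_of_isNoetherian_isArtinian R H₀
  set n₀ := s₀.length with hn₀
  have hH₀ : moduleLengthIs R H₀ n₀ := ⟨s₀, hh, hl, rfl⟩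
  have hFin : moduleLengthIs R (Fin ε → R) (ε * k) := by
    interval_cases ε
    · simpa using (moduleLengthIs_zero (R := R) (M := Fin 0 → R))
    · simpa using moduleLengthIs_congr (LinearEquiv.funUnique (Fin 1) R R).symm hk
  have hHlen : moduleLengthIs R H (ε * k + (lM + lM)) :=
    moduleLengthIs_congr eH.some.symm (moduleLengthIs_prod hFin (moduleLengthIs_prod hlM hlM))
  have hH'len : moduleLengthIs R H' (ε * k + (lM' + lM')) :=
    moduleLengthIs_congr eH'.some.symm (moduleLengthIs_prod hFin (moduleLengthIs_prod hlM' hlM'))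
  have hq1 := moduleLengthIs_quot_pow hk (show a ≤ k by omega)
  have hq2 := moduleLengthIs_quot_pow hk (show b ≤ k by omega)
  have hq3 := moduleLengthIs_quot_pow hk (show k - a - δ ≤ k by omega)
  have hq4 := moduleLengthIs_quot_pow hk (show k - b - δ ≤ k by omega)
  have hH2 : moduleLengthIs R H (n₀ + (a + b)) :=
    moduleLengthIs_subquot (LinearMap.range f)
      (moduleLengthIs_congr (LinearEquiv.ofInjective f hf) hH₀)
      (moduleLengthIs_congr hcokf.some.symm (moduleLengthIs_prod hq1 hq2))
  have hH'2 : moduleLengthIs R H' (n₀ + ((k - a - δ) + (k - b - δ))) :=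
    moduleLengthIs_subquot (LinearMap.range g)
      (moduleLengthIs_congr (LinearEquiv.ofInjective g hg) hH₀)
      (moduleLengthIs_congr hcokg.some.symm (moduleLengthIs_prod hq3 hq4))
  have e1 := moduleLengthIs_unique hHlen hH2
  have e2 := moduleLengthIs_unique hH'len hH'2
  omega
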